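/- The F-transform of the arcsine distribution with mean 0 and variance σ² equals F(z) = √(z² - 2σ²) for z in the upper half-plane, where the branch of the square root is chosen to map ℂ minus the nonnegative reals holomorphically with √(z²-2σ²) ~ z as z → ∞ in ℍ. -/

import Mathlib

open MeasureTheory Complex Filter

/-- The arcsine distribution with mean `0` and variance `v`, given by the density
`1/(π √(2v - x²))` on `(-√(2v), √(2v))` (the density vanishes elsewhere since in Lean
division by zero is zero). -/
noncomputable def arcsineMeasure (v : ℝ) : Measure ℝ :=
  MeasureTheory.volume.withDensity fun x =>
    ENNReal.ofReal (1 / (Real.pi * Real.sqrt (2 * v - x ^ 2)))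

open scoped ENNReal NNReal Real

lemma theta_integral (v : ℝ) (hv : 0 < v) (z sz : ℂ) (hz : 0 < z.im)
    (hsq : sz ^ 2 = z ^ 2 - 2 * v)
    (hbig : Real.sqrt (2*v) < ‖z + sz‖) :
    ∫ θ in (0:ℝ)..(2*Real.pi), (z - (Real.sqrt (2*v) * Real.sin θ : ℝ))⁻¹
      = 2 * Real.pi / sz := by
  set c : ℝ := Real.sqrt (2*v) with hcdef
  have hc : 0 < c := Real.sqrt_pos.mpr (by linarith)
  have hc2 : (c:ℂ)^2 = 2*v := by
    have := Real.sq_sqrt (by linarith : (0:ℝ) ≤ 2*v)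
    rw [← hcdef] at this  -- c^2 = 2v in ℝ
    exact_mod_cast congrArg (fun r : ℝ => (r:ℂ)) this
  have hcne : (c:ℂ) ≠ 0 := by exact_mod_cast hc.ne'
  clear_value c
  have hsz : sz ≠ 0 := by
    intro h
    rw [h] at hsq
    have hz2 : z^2 = 2*v := by linear_combination -hsq
    have : ‖z‖ ^ 2 = c^2 := by
      have := congrArg (‖·‖) hz2
      rw [norm_pow] at this
      rw [this, ← hc2]
      simpa using (norm_pow (c:ℂ) 2).symm
    have habs : ‖z‖ = c := by
      nlinarith [norm_nonneg z, hc]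
    rw [h, add_zero] at hbig
    linarith [hbig, habs]
  set a : ℂ := I * (z + sz) / c with hadef
  set b : ℂ := I * (z - sz) / c with hbdef
  have habs_a : 1 < ‖a‖ := by
    have : ‖a‖ = ‖z + sz‖ / c := by
      simp [hadef, Complex.norm_real, abs_of_pos hc]
    rw [this]
    rw [lt_div_iff₀ hc]
    simpa using hbig
  have hab : a * b = -1 := by
    rw [hadef, hbdef]
    field_simp
    linear_combination (z^2 - sz^2) * Complex.I_sq + hsq + hc2
  have habs_b : ‖b‖ < 1 := by
    have h1 : ‖a‖ * ‖b‖ = 1 := by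
      rw [← norm_mul, hab]; simp
    nlinarith [norm_nonneg b]
  have haneb : a - b ≠ 0 := by
    have : a - b = 2 * I * sz / c := by rw [hadef, hbdef]; field_simp; ring
    rw [this]
    exact div_ne_zero (mul_ne_zero (mul_ne_zero two_ne_zero I_ne_zero) hsz) hcne
  -- factorization
  have hfac : ∀ w : ℂ, I*z*w - (c/2)*(w^2-1) = -((c:ℂ)/2)*(w-a)*(w-b) := by
    intro w
    rw [hadef, hbdef]
    field_simp
    linear_combination (z^2 - sz^2) * Complex.I_sq + hsq + hc2
  have hab2 : a - b = 2 * I * sz / c := by rw [hadef, hbdef]; field_simp; ring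
  -- rewrite the interval integral as a circle integral
  have hne : ∀ θ : ℝ, z - ((c * Real.sin θ : ℝ) : ℂ) ≠ 0 := by
    intro θ h
    have h2 := congrArg Complex.im h
    simp only [Complex.sub_im, Complex.ofReal_im, Complex.zero_im, sub_zero] at h2
    linarith
  have key : (∫ θ in (0:ℝ)..(2*Real.pi), (z - ((c * Real.sin θ : ℝ) : ℂ))⁻¹)
      = ∮ w in C(0, 1), (I*z*w - ((c:ℂ)/2)*(w^2-1))⁻¹ := by
    rw [circleIntegral]
    refine intervalIntegral.integral_congr fun θ _ => ?_
    rw [deriv_circleMap]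
    have hcm : circleMap 0 1 θ = Complex.exp (θ * I) := by simp [circleMap]
    rw [hcm]
    set w := Complex.exp ((θ:ℂ) * I) with hwdef
    have hw0 : w ≠ 0 := Complex.exp_ne_zero _
    have hpy : Complex.sin (θ:ℂ) ^ 2 + Complex.cos (θ:ℂ) ^ 2 = 1 := Complex.sin_sq_add_cos_sq _
    have hexp : w = Complex.cos θ + Complex.sin θ * I := by rw [hwdef, Complex.exp_mul_I]
    have hden : I*z*w - ((c:ℂ)/2)*(w^2-1) = (z - ((c * Real.sin θ : ℝ) : ℂ)) * (w * I) := by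
      rw [hexp]
      push_cast
      linear_combination ((c:ℂ)/2 * Complex.sin (θ:ℂ)^2) * Complex.I_sq + (-(c:ℂ)/2) * hpy
    have hwI : w * I ≠ 0 := mul_ne_zero hw0 Complex.I_ne_zero
    rw [smul_eq_mul, hden, mul_inv, mul_comm ((z - ((c * Real.sin θ : ℝ) : ℂ))⁻¹),
      ← mul_assoc, mul_inv_cancel₀ hwI, one_mul]
  rw [key]
  -- evaluate the circle integral
  have hwa : ∀ w : ℂ, ‖w‖ ≤ 1 → w - a ≠ 0 := by
    intro w hw h
    rw [sub_eq_zero] at h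
    rw [h] at hw
    linarith
  have hwb : ∀ w ∈ Metric.sphere (0:ℂ) 1, w - b ≠ 0 := by
    intro w hw h
    rw [sub_eq_zero] at h
    rw [mem_sphere_zero_iff_norm] at hw
    rw [h] at hw
    linarith
  have h1 : Set.EqOn (fun w : ℂ => (I*z*w - ((c:ℂ)/2)*(w^2-1))⁻¹)
      (fun w : ℂ => ((a-b)⁻¹ * (-2/(c:ℂ))) • ((w - a)⁻¹ - (w - b)⁻¹))
      (Metric.sphere (0:ℂ) 1) := by
    intro w hw
    have h2 : w - a ≠ 0 := hwa w (le_of_eq (by simpa using mem_sphere_zero_iff_norm.mp hw)) 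
    have h3 : w - b ≠ 0 := hwb w hw
    simp only [smul_eq_mul]
    rw [hfac w]
    field_simp
    ring
  rw [circleIntegral.integral_congr zero_le_one h1]
  have hIa : CircleIntegrable (fun w : ℂ => (w - a)⁻¹) 0 1 :=
    circleIntegrable_sub_inv_iff.mpr (Or.inr (by
      intro h
      have := mem_sphere_zero_iff_norm.mp h
      rw [abs_one] at this
      linarith))
  have hIb : CircleIntegrable (fun w : ℂ => (w - b)⁻¹) 0 1 :=
    circleIntegrable_sub_inv_iff.mpr (Or.inr (by
      intro h
      have := mem_sphere_zero_iff_norm.mp h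
      rw [abs_one] at this
      linarith))
  have hzero : (∮ w in C(0, 1), (w - a)⁻¹) = 0 := by
    refine circleIntegral_eq_zero_of_differentiable_on_off_countable zero_le_one
      Set.countable_empty ?_ ?_
    · exact (continuousOn_id.sub continuousOn_const).inv₀ fun w hw =>
        hwa w (by simpa using Metric.mem_closedBall.mp hw)
    · intro w hw
      exact ((differentiableAt_id.sub (differentiableAt_const _)).inv
        (hwa w (le_of_lt (by simpa using Metric.mem_ball.mp hw.1)))) 
  have hball : b ∈ Metric.ball (0:ℂ) 1 := by
    rw [Metric.mem_ball, dist_zero_right]; exact habs_b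
  rw [circleIntegral.integral_smul, circleIntegral.integral_sub hIa hIb, hzero,
    circleIntegral.integral_sub_inv_of_mem_ball hball]
  rw [hab2, smul_eq_mul]
  have h2pi : (0:ℂ) - 2*Real.pi*I = -(2*Real.pi*I) := by ring
  field_simp
  first
  | ring
  | ring_nf
  | linear_combination (4*(Real.pi:ℂ)*sz) * Complex.I_sq
  | linear_combination (-4*(Real.pi:ℂ)*sz) * Complex.I_sq

lemma abs_add_gt (v : ℝ) (hv : 0 < v) (s : ℂ → ℂ)
    (hs : DifferentiableOn ℂ s {z : ℂ | 0 < z.im})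
    (hsq : ∀ z : ℂ, 0 < z.im → s z ^ 2 = z ^ 2 - 2 * v)
    (hasymp : Tendsto (fun y : ℝ => s (y * Complex.I) / (y * Complex.I)) atTop (nhds 1)) :
    ∀ z : ℂ, 0 < z.im → Real.sqrt (2*v) < ‖z + s z‖ := by
  set c : ℝ := Real.sqrt (2*v) with hcdef
  have hc : 0 < c := Real.sqrt_pos.mpr (by linarith)
  have hc2 : (c:ℂ)^2 = 2*v := by
    have := Real.sq_sqrt (by linarith : (0:ℝ) ≤ 2*v)
    rw [← hcdef] at this
    exact_mod_cast congrArg (fun r : ℝ => (r:ℂ)) this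
  clear_value c
  set U : Set ℂ := {z : ℂ | 0 < z.im} with hUdef
  have hUpc : IsPreconnected U := (convex_halfSpace_im_gt 0).isPreconnected
  set φ : ℂ → ℝ := fun z => ‖z + s z‖ with hφdef
  have hφ : ContinuousOn φ U :=
    continuous_norm.comp_continuousOn (continuousOn_id.add hs.continuousOn)
  have hne : ∀ z ∈ U, φ z ≠ c := by
    intro z hzU h
    have hzim : 0 < z.im := hzU
    have h0 : z + s z ≠ 0 := by
      intro h'
      rw [hφdef] at h
      simp only [h', norm_zero] at h
      linarith
    have hmul : (z + s z) * (z - s z) = (c:ℂ)^2 := by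
      linear_combination -(hsq z hzU) - hc2
    have hconj : (z + s z) * (starRingEnd ℂ (z + s z)) = (c:ℂ)^2 := by
      have habs : ‖z + s z‖ = c := h
      rw [Complex.mul_conj, Complex.normSq_eq_norm_sq, habs]
      push_cast
      ring
    have heq : z - s z = starRingEnd ℂ (z + s z) :=
      mul_left_cancel₀ h0 (hmul.trans hconj.symm)
    have him := congrArg Complex.im heq
    simp only [Complex.sub_im, Complex.conj_im, Complex.add_im] at him
    linarith
  have hfar : ∃ z ∈ U, c < φ z := by
    have hev : ∀ᶠ y : ℝ in atTop, s ((y:ℂ) * I) / ((y:ℂ) * I) ∈ Metric.ball (1:ℂ) (1/2) :=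
      hasymp.eventually (Metric.ball_mem_nhds (1:ℂ) (by norm_num))
    obtain ⟨y₀, hy₀⟩ := eventually_atTop.mp hev
    set y : ℝ := max y₀ (c + 1) with hydef
    have hy1 : c + 1 ≤ y := le_max_right _ _
    have hypos : 0 < y := by linarith
    have hzU : ((y:ℂ) * I) ∈ U := by
      simp only [hUdef, Set.mem_setOf_eq, Complex.mul_im, Complex.ofReal_re,
        Complex.I_im, Complex.ofReal_im, Complex.I_re, mul_zero, mul_one, zero_mul, add_zero]
      linarith
    refine ⟨(y:ℂ) * I, hzU, ?_⟩
    have hball := hy₀ y (le_max_left _ _)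
    rw [Metric.mem_ball, dist_eq_norm] at hball
    set q : ℂ := s ((y:ℂ) * I) / ((y:ℂ) * I) with hqdef
    have hz0 : ((y:ℂ) * I) ≠ 0 := by
      apply mul_ne_zero _ Complex.I_ne_zero
      exact_mod_cast hypos.ne'
    have hzq : (y:ℂ) * I + s ((y:ℂ) * I) = ((y:ℂ) * I) * (1 + q) := by
      rw [hqdef, mul_add, mul_one, mul_div_cancel₀ _ hz0]
    have habsz : ‖(y:ℂ) * I‖ = y := by
      rw [norm_mul, Complex.norm_real, Real.norm_eq_abs, Complex.norm_I, mul_one, abs_of_pos hypos]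
    have h1q : (3/2 : ℝ) ≤ ‖1 + q‖ := by
      have : ‖1 + q‖ = ‖(2 : ℂ) + (q - 1)‖ := by
        congr 1; ring
      rw [this]
      have h2 : ‖(2:ℂ)‖ ≤ ‖(2:ℂ) + (q - 1)‖ + ‖q - 1‖ := by
        have h4 : ‖(2:ℂ)‖ = ‖((2:ℂ) + (q - 1)) + (1 - q)‖ := by congr 1; ring
        rw [h4]
        have h5 := norm_add_le ((2:ℂ) + (q - 1)) (1 - q)
        have h6 : ‖(1:ℂ) - q‖ = ‖q - 1‖ := norm_sub_rev _ _
        linarith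
      have h3 : ‖(2:ℂ)‖ = 2 := by norm_num
      linarith
    rw [hφdef]
    simp only []
    rw [hzq, norm_mul, habsz]
    nlinarith
  intro z hz
  by_contra hcon
  push_neg at hcon
  obtain ⟨z₁, hz₁U, hgt⟩ := hfar
  have hz' : z ∈ U := hz
  have := hUpc.intermediate_value hz' hz₁U hφ
  have hmem : c ∈ Set.Icc (φ z) (φ z₁) := ⟨hcon, le_of_lt hgt⟩
  obtain ⟨w, hwU, hwc⟩ := this hmem
  exact hne w hwU hwc

lemma cauchy_reduce (v : ℝ) (hv : 0 < v) (z : ℂ) (hz : 0 < z.im) :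
    (∫ x : ℝ, (z - (x : ℂ))⁻¹ ∂(arcsineMeasure v))
      = (1/Real.pi : ℝ) • ∫ θ in Set.Ioo (-(Real.pi/2)) (Real.pi/2),
          (z - ((Real.sqrt (2*v) * Real.sin θ : ℝ) : ℂ))⁻¹ := by
  set c : ℝ := Real.sqrt (2*v) with hcdef
  have hc : 0 < c := Real.sqrt_pos.mpr (by linarith)
  have hc2 : c^2 = 2*v := Real.sq_sqrt (by linarith)
  have hρmeas : Measurable fun x : ℝ => (1 / (Real.pi * Real.sqrt (2*v - x^2))).toNNReal := by
    apply Measurable.real_toNNReal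
    have hcont : Continuous fun x : ℝ => Real.pi * Real.sqrt (2*v - x^2) :=
      continuous_const.mul (Real.continuous_sqrt.comp (by continuity))
    simp only [one_div]; exact hcont.measurable.inv
  have h1 : (∫ x : ℝ, (z - (x : ℂ))⁻¹ ∂(arcsineMeasure v))
      = ∫ x : ℝ, (1 / (Real.pi * Real.sqrt (2*v - x^2))).toNNReal • (z - (x : ℂ))⁻¹ := by
    rw [arcsineMeasure]
    rw [show (fun x : ℝ => ENNReal.ofReal (1 / (Real.pi * Real.sqrt (2 * v - x ^ 2))))
      = (fun x : ℝ => ((1 / (Real.pi * Real.sqrt (2*v - x^2))).toNNReal : ℝ≥0∞)) from rfl]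
    exact integral_withDensity_eq_integral_smul hρmeas _
  rw [h1]
  have h2 : ∀ x : ℝ, (1 / (Real.pi * Real.sqrt (2*v - x^2))).toNNReal • (z - (x : ℂ))⁻¹
      = (1 / (Real.pi * Real.sqrt (2*v - x^2))) • (z - (x : ℂ))⁻¹ := by
    intro x
    rw [NNReal.smul_def, Real.coe_toNNReal _ (by positivity)]
  simp only [h2]
  rw [← setIntegral_eq_integral_of_forall_compl_eq_zero
    (s := Set.Ioo (-c) c) (by
      intro x hx
      have hx2 : 2*v - x^2 ≤ 0 := by
        simp only [Set.mem_Ioo, not_and_or, not_lt] at hx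
        rcases hx with h | h
        · nlinarith
        · nlinarith
      rw [Real.sqrt_eq_zero_of_nonpos hx2]
      simp)]
  have himg : Set.Ioo (-c) c = (fun θ : ℝ => c * Real.sin θ) '' Set.Ioo (-(Real.pi/2)) (Real.pi/2) := by
    ext x
    simp only [Set.mem_image, Set.mem_Ioo]
    constructor
    · rintro ⟨hx1, hx2⟩
      have hd1 : -1 < x / c := by rw [lt_div_iff₀ hc]; linarith
      have hd2 : x / c < 1 := (div_lt_one hc).mpr hx2
      refine ⟨Real.arcsin (x/c), ⟨Real.neg_pi_div_two_lt_arcsin.mpr hd1,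
        Real.arcsin_lt_pi_div_two.mpr hd2⟩, ?_⟩
      rw [Real.sin_arcsin hd1.le hd2.le]
      field_simp
    · rintro ⟨θ, ⟨h1', h2'⟩, rfl⟩
      have hm1 : -(Real.pi/2) ∈ Set.Icc (-(Real.pi/2)) (Real.pi/2) := by
        constructor <;> [exact le_refl _; linarith [Real.pi_pos]]
      have hm2 : (Real.pi/2) ∈ Set.Icc (-(Real.pi/2)) (Real.pi/2) := by
        constructor <;> [linarith [Real.pi_pos]; exact le_refl _]
      have hmθ : θ ∈ Set.Icc (-(Real.pi/2)) (Real.pi/2) := ⟨h1'.le, h2'.le⟩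
      have hlo : Real.sin (-(Real.pi/2)) < Real.sin θ := Real.strictMonoOn_sin hm1 hmθ h1'
      have hhi : Real.sin θ < Real.sin (Real.pi/2) := Real.strictMonoOn_sin hmθ hm2 h2'
      rw [Real.sin_neg, Real.sin_pi_div_two] at hlo
      rw [Real.sin_pi_div_two] at hhi
      constructor <;> nlinarith
  rw [himg]
  rw [integral_image_eq_integral_abs_deriv_smul measurableSet_Ioo
    (fun θ _ => ((Real.hasDerivAt_sin θ).const_mul c).hasDerivWithinAt)
    (fun θ1 h1' θ2 h2' he => Real.injOn_sin (Set.Ioo_subset_Icc_self h1')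
      (Set.Ioo_subset_Icc_self h2') (mul_left_cancel₀ hc.ne' he))]
  rw [← integral_smul]
  refine setIntegral_congr_fun measurableSet_Ioo ?_
  intro θ hθ
  have hcos : 0 < Real.cos θ := Real.cos_pos_of_mem_Ioo hθ
  have hsqrt : Real.sqrt (2*v - (c * Real.sin θ)^2) = c * Real.cos θ := by
    have hθ2 : 2*v - (c * Real.sin θ)^2 = (c * Real.cos θ)^2 := by
      nlinarith [Real.sin_sq_add_cos_sq θ]
    rw [hθ2, Real.sqrt_sq (by positivity)]
  simp only [hsqrt, smul_smul]
  congr 1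
  rw [abs_of_pos (by positivity)]
  field_simp


/-- The F-transform of the arcsine distribution with mean `0` and variance `v = σ²`
equals `√(z² - 2v)` on the upper half-plane, where `s z = √(z² - 2v)` is the holomorphic
branch of the square root with `s z ~ z` as `z → ∞` in the upper half-plane. -/
theorem arcsine_F_transform (v : ℝ) (hv : 0 < v) (s : ℂ → ℂ)
    (hs : DifferentiableOn ℂ s {z : ℂ | 0 < z.im})
    (hsq : ∀ z : ℂ, 0 < z.im → s z ^ 2 = z ^ 2 - 2 * v)
    (hasymp : Tendsto (fun y : ℝ => s (y * Complex.I) / (y * Complex.I)) atTop (nhds 1)) :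
    ∀ z : ℂ, 0 < z.im →
      (∫ x : ℝ, (z - (x : ℂ))⁻¹ ∂(arcsineMeasure v))⁻¹ = s z := by
  intro z hz
  have hc : 0 < Real.sqrt (2*v) := Real.sqrt_pos.mpr (by linarith)
  have hbig : Real.sqrt (2*v) < ‖z + s z‖ := abs_add_gt v hv s hs hsq hasymp z hz
  have hθ := theta_integral v hv z (s z) hz (hsq z hz) hbig
  have hred := cauchy_reduce v hv z hz
  have hsz : s z ≠ 0 := by
    intro h
    have h1 := hsq z hz
    rw [h] at h1
    have hz2 : z^2 = 2*(v:ℂ) := by linear_combination -h1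
    have habs2 : ‖z‖ ^ 2 = Real.sqrt (2*v) ^ 2 := by
      have h3 := congrArg (‖·‖) hz2
      rw [norm_pow] at h3
      rw [h3, Real.sq_sqrt (by linarith : (0:ℝ) ≤ 2*v)]
      have : ((2*v : ℝ) : ℂ) = 2*(v:ℂ) := by push_cast; ring
      rw [← this, Complex.norm_real, Real.norm_eq_abs, abs_of_pos (by linarith)]
    have habs : ‖z‖ = Real.sqrt (2*v) := by
      nlinarith [norm_nonneg z, hc]
    rw [h, add_zero] at hbig
    linarith
  set g : ℝ → ℂ := fun θ => (z - ((Real.sqrt (2*v) * Real.sin θ : ℝ) : ℂ))⁻¹ with hgdef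
  have hne : ∀ θ : ℝ, z - ((Real.sqrt (2*v) * Real.sin θ : ℝ) : ℂ) ≠ 0 := by
    intro θ h
    have h2 := congrArg Complex.im h
    simp only [Complex.sub_im, Complex.ofReal_im, Complex.zero_im, sub_zero] at h2
    linarith
  have hgcont : Continuous g := by
    apply Continuous.inv₀
    · continuity
    · exact hne
  have hint : ∀ a b : ℝ, IntervalIntegrable g MeasureTheory.volume a b :=
    fun a b => hgcont.intervalIntegrable a b
  have hper : Function.Periodic g (2*Real.pi) := by
    intro θ
    simp only [hgdef, Real.sin_add_two_pi]
  have hsym : (∫ θ in (-(Real.pi/2))..(Real.pi/2), g θ)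
      = ∫ θ in (Real.pi/2)..(-(Real.pi/2) + 2*Real.pi), g θ := by
    have h1 := intervalIntegral.integral_comp_sub_left (a := -(Real.pi/2)) (b := Real.pi/2) g Real.pi
    have h2 : ∀ θ : ℝ, g (Real.pi - θ) = g θ := by
      intro θ; simp only [hgdef, Real.sin_pi_sub]
    simp only [h2] at h1
    rw [h1]
    congr 1 <;> ring
  have hsplit := intervalIntegral.integral_add_adjacent_intervals
    (hint (-(Real.pi/2)) (Real.pi/2)) (hint (Real.pi/2) (-(Real.pi/2) + 2*Real.pi))
  have h2J : (∫ θ in (0:ℝ)..(2*Real.pi), g θ)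
      = 2 * ∫ θ in (-(Real.pi/2))..(Real.pi/2), g θ := by
    have e1 : (0:ℝ) + 2*Real.pi = 2*Real.pi := by ring
    calc ∫ θ in (0:ℝ)..(2*Real.pi), g θ
        = ∫ θ in (0:ℝ)..(0 + 2*Real.pi), g θ := by rw [e1]
      _ = ∫ θ in (-(Real.pi/2))..(-(Real.pi/2) + 2*Real.pi), g θ :=
          (hper.intervalIntegral_add_eq (-(Real.pi/2)) 0).symm
      _ = (∫ θ in (-(Real.pi/2))..(Real.pi/2), g θ)
          + ∫ θ in (Real.pi/2)..(-(Real.pi/2) + 2*Real.pi), g θ := hsplit.symm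
      _ = 2 * ∫ θ in (-(Real.pi/2))..(Real.pi/2), g θ := by rw [← hsym]; ring
  have hJval : (∫ θ in (-(Real.pi/2))..(Real.pi/2), g θ) = Real.pi / s z := by
    have h := h2J.symm.trans hθ
    have hπ : (Real.pi : ℂ) ≠ 0 := by exact_mod_cast Real.pi_ne_zero
    field_simp at h ⊢
    linear_combination h
  have hIoo : (∫ θ in Set.Ioo (-(Real.pi/2)) (Real.pi/2), g θ)
      = ∫ θ in (-(Real.pi/2))..(Real.pi/2), g θ := by
    rw [intervalIntegral.integral_of_le (by linarith [Real.pi_pos]),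
      MeasureTheory.integral_Ioc_eq_integral_Ioo]
  rw [hred, hIoo, hJval]
  have hπ : (Real.pi : ℂ) ≠ 0 := by exact_mod_cast Real.pi_ne_zero
  rw [Complex.real_smul]
  push_cast
  field_simp
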